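/- arXiv:2503.15071 — 4 statements merged into one kernel-verified Lean document; each statement's English description precedes it below -/
import Mathlib

section
/- Let c_* := π/(2√2) and η̃(x) := (π² − 4πx + 2x²)/16. Then for every x ∈ (0, 2π) one has (c_*² − 2η̃(x))·η̃''(x) − (η̃'(x))² + η̃(x) = 0; that is, the peaked periodic profile solves the traveling-wave equation with speed c_* away from its peaks. -/
open Real

/-- The limiting wave speed `c_* = π/(2√2)`. -/
noncomputable def cStar : ℝ := π / (2 * Real.sqrt 2)

/-- The peaked periodic profile written on the period `[0, 2π]`
(peaks at the endpoints). -/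
noncomputable def etaTilde (x : ℝ) : ℝ := (π ^ 2 - 4 * π * x + 2 * x ^ 2) / 16

lemma etaTilde_deriv : deriv etaTilde = fun x => (x - π) / 4 := by
  funext x
  have h : HasDerivAt etaTilde ((x - π) / 4) x := by
    have : HasDerivAt (fun x : ℝ => (π ^ 2 - 4 * π * x + 2 * x ^ 2) / 16)
        ((0 - 4 * π * 1 + 2 * (2 * x)) / 16) x := by
      apply HasDerivAt.div_const
      exact ((hasDerivAt_const x (π ^ 2)).sub ((hasDerivAt_id x).const_mul (4 * π))).add
        (((hasDerivAt_id x).pow 2).const_mul 2) |>.congr_deriv (by simp)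
    unfold etaTilde
    simpa using this.congr_deriv (by ring)
  exact h.deriv

lemma etaTilde_deriv2 : deriv (deriv etaTilde) = fun _ => (1:ℝ)/4 := by
  rw [etaTilde_deriv]
  funext x
  have h : HasDerivAt (fun x : ℝ => (x - π) / 4) (1 / 4) x := by
    simpa using ((hasDerivAt_id x).sub (hasDerivAt_const x π)).div_const 4
  exact h.deriv

/-- The peaked profile solves the traveling-wave equation with speed `c_*`
away from its peaks. -/
theorem peaked_profile_solves_TW : ∀ x ∈ Set.Ioo (0:ℝ) (2 * π),
    (cStar ^ 2 - 2 * etaTilde x) * deriv (deriv etaTilde) x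
      - (deriv etaTilde x) ^ 2 + etaTilde x = 0 := by
  intro x _
  have hc : cStar ^ 2 = π ^ 2 / 8 := by
    have h2 : Real.sqrt 2 ^ 2 = 2 := Real.sq_sqrt (by norm_num)
    unfold cStar
    field_simp [cStar]
    nlinarith [h2]
  rw [etaTilde_deriv2, etaTilde_deriv, hc]
  simp only [etaTilde]
  ring
end

section
/- Let η̃(x) := (π² − 4πx + 2x²)/16 and c_* := π/(2√2). Then for every x ∈ [0, 2π]: (1/4)·(c_*² − 2η̃(x)) − (1/π)·∫₀^{2π} (η̃'(s))² ds + (1/2)·η̃(x) − (1/4π)·∫₀^{2π} η̃(s) ds = 0. (Here ∫₀^{2π}(η̃'(s))² ds = π³/24 and ∫₀^{2π} η̃(s) ds = −π³/24.) This identity expresses that A η̃' = 0 away from the peak, i.e., the derivative of the peaked profile lies in the kernel of the linearized operator A in L². -/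
open Real MeasureTheory

lemma deriv_etaTilde (x : ℝ) : deriv etaTilde x = (x - π) / 4 := by
  have h : HasDerivAt etaTilde ((x - π) / 4) x := by
    have : HasDerivAt (fun x : ℝ => (π ^ 2 - 4 * π * x + 2 * x ^ 2) / 16)
        ((0 - 4 * π * 1 + 2 * (2 * x ^ 1)) / 16) x := by
      apply HasDerivAt.div_const
      exact (((hasDerivAt_const x (π ^ 2)).sub ((hasDerivAt_id x).const_mul (4 * π))).add
        ((hasDerivAt_pow 2 x).const_mul 2))
    convert this using 1
    · rfl
    ring
  exact h.deriv

lemma poly_integral (a b c T : ℝ) :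
    (∫ s in (0:ℝ)..T, (a * s ^ 2 + b * s + c))
      = a * T ^ 3 / 3 + b * T ^ 2 / 2 + c * T := by
  have hq : IntervalIntegrable (fun s : ℝ => a * s ^ 2) volume 0 T :=
    (continuous_const.mul (continuous_pow 2)).intervalIntegrable 0 T
  have hl : IntervalIntegrable (fun s : ℝ => b * s) volume 0 T :=
    (continuous_const.mul continuous_id).intervalIntegrable 0 T
  have hc : IntervalIntegrable (fun _ : ℝ => c) volume 0 T :=
    intervalIntegrable_const
  rw [intervalIntegral.integral_add (hq.add hl) hc, intervalIntegral.integral_add hq hl,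
    intervalIntegral.integral_const_mul, intervalIntegral.integral_const_mul,
    integral_pow, integral_id, intervalIntegral.integral_const]
  push_cast
  simp
  ring

/-- The identity expressing `A η̃' = 0` away from the peak: for every `x ∈ [0, 2π]`,
`(1/4)(c_*² − 2η̃(x)) − (1/π)∫₀^{2π}(η̃')² + (1/2)η̃(x) − (1/4π)∫₀^{2π}η̃ = 0`,
together with the values `∫₀^{2π}(η̃')² = π³/24` and `∫₀^{2π}η̃ = −π³/24`. -/
theorem derivative_in_kernel_of_A :
    (∫ s in (0:ℝ)..(2*π), (deriv etaTilde s) ^ 2) = π ^ 3 / 24 ∧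
    (∫ s in (0:ℝ)..(2*π), etaTilde s) = -(π ^ 3) / 24 ∧
    ∀ x ∈ Set.Icc (0:ℝ) (2 * π),
      (1/4) * (cStar ^ 2 - 2 * etaTilde x)
        - (1/π) * (∫ s in (0:ℝ)..(2*π), (deriv etaTilde s) ^ 2)
        + (1/2) * etaTilde x
        - (1/(4*π)) * (∫ s in (0:ℝ)..(2*π), etaTilde s) = 0 := by
  have h1 : (∫ s in (0:ℝ)..(2*π), (deriv etaTilde s) ^ 2) = π ^ 3 / 24 := by
    have e : (∫ s in (0:ℝ)..(2*π), (deriv etaTilde s) ^ 2)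
        = ∫ s in (0:ℝ)..(2*π), (1/16 * s^2 + (-π/8) * s + π^2/16) := by
      apply intervalIntegral.integral_congr
      intro s _
      simp only [deriv_etaTilde]
      ring
    rw [e, poly_integral]
    ring
  have h2 : (∫ s in (0:ℝ)..(2*π), etaTilde s) = -(π ^ 3) / 24 := by
    have e : (∫ s in (0:ℝ)..(2*π), etaTilde s)
        = ∫ s in (0:ℝ)..(2*π), (1/8 * s^2 + (-π/4) * s + π^2/16) := by
      apply intervalIntegral.integral_congr
      intro s _
      simp only [etaTilde]
      ring
    rw [e, poly_integral]
    ring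
  refine ⟨h1, h2, fun x _ => ?_⟩
  rw [h1, h2]
  have hc : cStar ^ 2 = π ^ 2 / 8 := by
    unfold cStar
    rw [div_pow, mul_pow, Real.sq_sqrt (by norm_num : (0:ℝ) ≤ 2)]
    norm_num
  rw [hc]
  unfold etaTilde
  have hπ : π ≠ 0 := Real.pi_ne_zero
  field_simp
  ring
end

section
/- Let ζ : ℝ → ℝ be 2π-periodic and integrable on [−π, π], and set ζ̄ := (1/2π)·∫_{−π}^{π} ζ(y) dy. Then (1/π)·∫_{−π}^{π} ( −(1/4)·(π − |x|)·sign(x) )·ζ(x) dx = −(1/4π)·∫_{−π}^{π} ( ∫₀^{x} (ζ(y) − ζ̄) dy ) dx. Equivalently, (1/π)·∮ η_*' ζ dx = (1/2)·(Π₀∂ₓ⁻¹Π₀ ζ)(0), where η_* is the peaked profile with peak at x = 0. -/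
open Real MeasureTheory intervalIntegral Set Filter Asymptotics Topology

namespace KeyCancelAux

lemma bdd_mul_ii {f g : ℝ → ℝ} {a b : ℝ} (hf : IntervalIntegrable f volume a b)
    (hg : AEStronglyMeasurable g volume) {C : ℝ} (hC : ∀ x ∈ Set.uIoc a b, |g x| ≤ C) :
    IntervalIntegrable (fun x => g x * f x) volume a b := by
  rw [intervalIntegrable_iff] at hf ⊢
  refine Integrable.bdd_mul (c := C) hf hg.restrict ?_
  filter_upwards [ae_restrict_mem measurableSet_uIoc] with x hx using hC x hx

lemma hasDerivAt_moment (g : ℝ → ℝ) (hg : Integrable g volume) (a v : ℝ) :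
    HasDerivAt (fun x => ∫ y in a..x, (x - y) * g y) (∫ y in a..v, g y) v := by
  have hgi : ∀ c d : ℝ, IntervalIntegrable g volume c d := fun c d => hg.intervalIntegrable
  have hmul : ∀ u c d : ℝ, IntervalIntegrable (fun y => (u - y) * g y) volume c d := by
    intro u c d
    exact (hgi c d).continuousOn_mul (by fun_prop)
  rw [hasDerivAt_iff_isLittleO]
  have key : ∀ u : ℝ,
      (∫ y in a..u, (u - y) * g y) - (∫ y in a..v, (v - y) * g y)
        - (u - v) • (∫ y in a..v, g y) = ∫ y in v..u, (u - y) * g y := by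
    intro u
    have h1 : (∫ y in a..v, (u - y) * g y) + (∫ y in v..u, (u - y) * g y)
        = ∫ y in a..u, (u - y) * g y :=
      integral_add_adjacent_intervals (hmul u a v) (hmul u v u)
    have h2 : (∫ y in a..v, (u - y) * g y)
        = (∫ y in a..v, (v - y) * g y) + (u - v) * ∫ y in a..v, g y := by
      rw [← intervalIntegral.integral_const_mul, ← integral_add (hmul v a v) (((hgi a v)).const_mul _)]
      congr 1 with y; ring
    rw [← h1, h2]; simp [smul_eq_mul]; ring
  rw [isLittleO_iff]
  intro c hc
  have habs : Continuous fun u => ∫ y in v..u, |g y| :=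
    intervalIntegral.continuous_primitive (fun c d => hg.abs.intervalIntegrable) v
  have h0 : (∫ y in v..v, |g y|) = 0 := integral_same
  have hT : Tendsto (fun u => ∫ y in v..u, |g y|) (𝓝 v) (𝓝 0) := by
    simpa [h0] using habs.tendsto v
  have hev : ∀ᶠ u in 𝓝 v, |(∫ y in v..u, |g y|)| < c := by
    have := hT.eventually (eventually_abs_sub_lt 0 hc)
    simpa using this
  filter_upwards [hev] with u hu
  rw [show ((∫ (y : ℝ) in a..u, (u - y) * g y) - ∫ (y : ℝ) in a..v, (v - y) * g y)
      - (u - v) • ∫ (y : ℝ) in a..v, g y = ∫ y in v..u, (u - y) * g y from key u]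
  have hb : ‖∫ y in v..u, (u - y) * g y‖ ≤ |(∫ y in v..u, |u - v| * |g y|)| := by
    apply intervalIntegral.norm_integral_le_abs_of_norm_le
    · filter_upwards [ae_restrict_mem measurableSet_uIoc] with y hy
      have h1 : |u - y| ≤ |u - v| := by
        rcases le_total v u with h | h
        · rw [uIoc_of_le h] at hy
          rw [abs_of_nonneg (by linarith [hy.2]), abs_of_nonneg (by linarith)]
          linarith [hy.1]
        · rw [uIoc_of_ge h] at hy
          rw [abs_of_nonpos (by linarith [hy.1]), abs_of_nonpos (by linarith)]
          linarith [hy.2]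
      calc ‖(u - y) * g y‖ = |u - y| * |g y| := abs_mul _ _
        _ ≤ |u - v| * |g y| := by
            exact mul_le_mul_of_nonneg_right h1 (abs_nonneg _)
    · exact (hg.abs.intervalIntegrable).const_mul _
  refine hb.trans ?_
  rw [intervalIntegral.integral_const_mul, abs_mul, abs_abs]
  calc |u - v| * |(∫ y in v..u, |g y|)| ≤ |u - v| * c :=
        mul_le_mul_of_nonneg_left hu.le (abs_nonneg _)
    _ = c * ‖u - v‖ := by rw [Real.norm_eq_abs]; ring

/-- Triangle swap: `∫_a^b ∫_a^x g = ∫_a^b (b-y) g(y) dy` for interval integrable `g`. -/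
lemma triangle (g : ℝ → ℝ) (a b : ℝ) (hab : a ≤ b)
    (hg : IntervalIntegrable g volume a b) :
    (∫ x in a..b, (∫ y in a..x, g y)) = ∫ y in a..b, (b - y) * g y := by
  set g' : ℝ → ℝ := (Set.uIcc a b).indicator g with hg'
  have hgint : Integrable g' volume := by
    rw [integrable_indicator_iff measurableSet_uIcc]
    rw [uIcc_of_le hab]
    exact (intervalIntegrable_iff_integrableOn_Icc_of_le hab).mp hg
  have hEq : ∀ c d : ℝ, c ∈ Set.Icc a b → d ∈ Set.Icc a b →
      (∫ y in c..d, g' y) = ∫ y in c..d, g y := by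
    intro c d hc hd
    apply intervalIntegral.integral_congr
    intro y hy
    have : y ∈ Set.uIcc a b := by
      rw [uIcc_of_le hab]
      have := uIcc_subset_uIcc (show c ∈ uIcc a b by rw [uIcc_of_le hab]; exact hc)
        (show d ∈ uIcc a b by rw [uIcc_of_le hab]; exact hd) hy
      rwa [uIcc_of_le hab] at this
    simp [hg', indicator_of_mem this]
  have hmulEq : (∫ y in a..b, (b - y) * g' y) = ∫ y in a..b, (b - y) * g y := by
    apply intervalIntegral.integral_congr
    intro y hy
    rw [uIcc_of_le hab] at hy
    simp [hg', indicator_of_mem (by rw [uIcc_of_le hab]; exact hy : y ∈ uIcc a b)]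
  have hftc : (∫ x in a..b, (∫ y in a..x, g' y))
      = (∫ y in a..b, (b - y) * g' y) - ∫ y in a..a, (a - y) * g' y := by
    apply intervalIntegral.integral_eq_sub_of_hasDerivAt
    · intro x hx
      exact hasDerivAt_moment g' hgint a x
    · apply Continuous.intervalIntegrable
      exact intervalIntegral.continuous_primitive (fun c d => hgint.intervalIntegrable) a
  have hcongr : (∫ x in a..b, (∫ y in a..x, g' y)) = ∫ x in a..b, (∫ y in a..x, g y) := by
    apply intervalIntegral.integral_congr
    intro x hx
    rw [uIcc_of_le hab] at hx
    exact hEq a x ⟨le_refl a, hab⟩ hx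
  rw [← hcongr, hftc, integral_same, sub_zero, hmulEq]

lemma measurable_rsign : Measurable Real.sign := by
  have h : Real.sign = fun r : ℝ => if r < 0 then (-1:ℝ) else if 0 < r then 1 else 0 := by
    funext r; rfl
  rw [h]
  exact Measurable.ite (measurableSet_lt measurable_id measurable_const) measurable_const
    (Measurable.ite (measurableSet_lt measurable_const measurable_id) measurable_const
      measurable_const)

end KeyCancelAux

open KeyCancelAux

/-- The key cancellation identity in the derivation of the linearized equation at
the peaked wave: `(1/π)∮ η_*' ζ dx = (1/2)(Π₀∂ₓ⁻¹Π₀ ζ)(0)`, written explicitly as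
`(1/π)∫_{−π}^{π}(−(1/4)(π − |x|)sign x)ζ(x)dx
  = −(1/4π)∫_{−π}^{π}(∫₀ˣ(ζ(y) − ζ̄)dy)dx`. -/
theorem key_cancellation (ζ : ℝ → ℝ) (hper : ∀ x : ℝ, ζ (x + 2 * π) = ζ x)
    (hint : IntervalIntegrable ζ volume (-π) π) :
    (1/π) * (∫ x in (-π)..π, (-(1/4) * (π - |x|) * Real.sign x) * ζ x)
      = -(1/(4*π)) * ∫ x in (-π)..π,
          (∫ y in (0:ℝ)..x, (ζ y - (1/(2*π)) * ∫ s in (-π)..π, ζ s)) := by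
  have hπ : (0:ℝ) < π := Real.pi_pos
  set c : ℝ := (1/(2*π)) * ∫ s in (-π)..π, ζ s with hcdef
  set φ : ℝ → ℝ := fun x => -(1/4) * (π - |x|) * Real.sign x with hφdef
  set g : ℝ → ℝ := fun y => ζ y - c with hgdef
  have hgI : IntervalIntegrable g volume (-π) π := hint.sub intervalIntegrable_const
  have hmono : ∀ u v : ℝ, u ∈ Icc (-π) π → v ∈ Icc (-π) π →
      IntervalIntegrable g volume u v := by
    intro u v hu hv
    refine hgI.mono_set ?_
    exact uIcc_subset_uIcc (by rw [uIcc_of_le (neg_le_self hπ.le)]; exact hu)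
      (by rw [uIcc_of_le (neg_le_self hπ.le)]; exact hv)
  have hsub : ∀ u v : ℝ, u ∈ Icc (-π) π → v ∈ Icc (-π) π →
      uIcc u v ⊆ uIcc (-π) π := fun u v hu hv =>
    uIcc_subset_uIcc (by rw [uIcc_of_le (neg_le_self hπ.le)]; exact hu)
      (by rw [uIcc_of_le (neg_le_self hπ.le)]; exact hv)
  set K : ℝ := ∫ y in (-π)..(0:ℝ), g y with hKdef
  have hKI : IntervalIntegrable g volume (-π) 0 :=
    hmono _ _ ⟨le_refl _, neg_le_self hπ.le⟩ ⟨neg_nonpos.mpr hπ.le, hπ.le⟩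
  -- measurability and boundedness of φ
  have hφm : AEStronglyMeasurable φ volume := by
    refine Measurable.aestronglyMeasurable ?_
    exact ((measurable_const.mul (measurable_const.sub measurable_abs)).mul measurable_rsign)
  have hφbdd : ∀ x ∈ Set.uIoc (-π) π, |φ x| ≤ π := by
    intro x hx
    rw [uIoc_of_le (neg_le_self hπ.le)] at hx
    have hxabs : |x| ≤ π := abs_le.mpr ⟨hx.1.le, hx.2⟩
    have h1 : |Real.sign x| ≤ 1 := by
      rcases lt_trichotomy x 0 with h | h | h
      · rw [Real.sign_of_neg h]; norm_num
      · simp [h, Real.sign_zero]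
      · rw [Real.sign_of_pos h]; norm_num
    have : |φ x| = (1/4) * abs (π - |x|) * |Real.sign x| := by
      rw [hφdef]; simp [abs_mul]
    rw [this]
    have h2 : abs (π - |x|) ≤ π := by
      rw [abs_of_nonneg (by linarith)]; linarith [abs_nonneg x]
    have h3 := mul_le_mul h2 h1 (abs_nonneg _) hπ.le
    nlinarith [abs_nonneg (π - |x|), abs_nonneg (Real.sign x)]
  -- interval integrability of products with φ
  have hφζ : IntervalIntegrable (fun x => φ x * ζ x) volume (-π) π :=
    bdd_mul_ii hint hφm hφbdd
  have hφg : IntervalIntegrable (fun x => φ x * g x) volume (-π) π :=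
    bdd_mul_ii hgI hφm hφbdd
  have hφI : IntervalIntegrable φ volume (-π) π := by
    have := bdd_mul_ii (f := fun _ => (1:ℝ)) (a := -π) (b := π)
      intervalIntegrable_const hφm hφbdd
    simpa using this
  -- φ is odd, so its integral vanishes
  have hφodd : ∀ x, φ (-x) = -φ x := by
    intro x
    rcases lt_trichotomy x 0 with h | h | h
    · simp only [hφdef, Real.sign_of_neg h, Real.sign_of_pos (by linarith : (0:ℝ) < -x),
        abs_neg]
      ring
    · simp [h, hφdef, Real.sign_zero]
    · simp only [hφdef, Real.sign_of_pos h, Real.sign_of_neg (by linarith : -x < 0), abs_neg]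
      ring
  have hφzero : (∫ x in (-π)..π, φ x) = 0 := by
    have hsplit : (∫ x in (-π)..(0:ℝ), φ x) + (∫ x in (0:ℝ)..π, φ x)
        = ∫ x in (-π)..π, φ x :=
      integral_add_adjacent_intervals
        (hφI.mono_set (hsub _ _ ⟨le_refl _, neg_le_self hπ.le⟩
          ⟨neg_nonpos.mpr hπ.le, hπ.le⟩))
        (hφI.mono_set (hsub _ _ ⟨neg_nonpos.mpr hπ.le, hπ.le⟩
          ⟨neg_le_self hπ.le, le_refl _⟩))
    have hneg : (∫ x in (-π)..(0:ℝ), φ x) = -∫ x in (0:ℝ)..π, φ x := by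
      have h1 : (∫ x in (0:ℝ)..π, φ (-x)) = ∫ x in (-π)..(0:ℝ), φ x := by
        simpa using intervalIntegral.integral_comp_neg (a := (0:ℝ)) (b := π) φ
      rw [← h1]
      simp only [hφodd]
      rw [intervalIntegral.integral_neg]
    rw [← hsplit, hneg]; ring
  -- LHS simplification
  have hLHS : (∫ x in (-π)..π, (-(1/4) * (π - |x|) * Real.sign x) * ζ x)
      = ∫ x in (-π)..π, φ x * g x := by
    have h1 : (∫ x in (-π)..π, (-(1/4) * (π - |x|) * Real.sign x) * ζ x)
        = ∫ x in (-π)..π, (φ x * g x + c * φ x) := by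
      apply intervalIntegral.integral_congr
      intro x _
      simp only [hφdef, hgdef]
      ring
    rw [h1, intervalIntegral.integral_add hφg (hφI.const_mul c),
      intervalIntegral.integral_const_mul, hφzero, mul_zero, add_zero]
  -- RHS: rewrite inner integral and apply the triangle swap
  have hRHS : (∫ x in (-π)..π,
        (∫ y in (0:ℝ)..x, (ζ y - (1/(2*π)) * ∫ s in (-π)..π, ζ s)))
      = (∫ y in (-π)..π, (π - y) * g y) - (2*π) * K := by
    have hF : ContinuousOn (fun x => ∫ y in (-π)..x, g y) (uIcc (-π) π) :=
      intervalIntegral.continuousOn_primitive_interval'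
        (by rw [uIcc_of_le (neg_le_self hπ.le)] at *; exact hgI)
        (by rw [uIcc_of_le (neg_le_self hπ.le)]; exact ⟨le_refl _, neg_le_self hπ.le⟩)
    have hFI : IntervalIntegrable (fun x => ∫ y in (-π)..x, g y) volume (-π) π :=
      hF.intervalIntegrable
    have h1 : (∫ x in (-π)..π,
          (∫ y in (0:ℝ)..x, (ζ y - (1/(2*π)) * ∫ s in (-π)..π, ζ s)))
        = ∫ x in (-π)..π, ((∫ y in (-π)..x, g y) - K) := by
      have h0 : (∫ x in (-π)..π,
            (∫ y in (0:ℝ)..x, (ζ y - (1/(2*π)) * ∫ s in (-π)..π, ζ s)))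
          = ∫ x in (-π)..π, (∫ y in (0:ℝ)..x, g y) := rfl
      rw [h0]
      apply intervalIntegral.integral_congr
      intro x hx
      rw [uIcc_of_le (neg_le_self hπ.le)] at hx
      have h2 := intervalIntegral.integral_interval_sub_left
        (hmono _ _ ⟨le_refl _, neg_le_self hπ.le⟩ hx)
        (hmono _ _ ⟨le_refl _, neg_le_self hπ.le⟩ ⟨neg_nonpos.mpr hπ.le, hπ.le⟩)
      simp only
      rw [hKdef]
      exact h2.symm
    rw [h1, intervalIntegral.integral_sub hFI intervalIntegrable_const,
      intervalIntegral.integral_const, triangle g (-π) π (neg_le_self hπ.le) hgI]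
    rw [smul_eq_mul]
    ring_nf
  -- core identity: ∫ φ g = -(1/4) (∫ (π-y) g - 2π K)
  have hcore : (∫ x in (-π)..π, φ x * g x)
      = -(1/4) * ((∫ y in (-π)..π, (π - y) * g y) - (2*π) * K) := by
    have hg0 : IntervalIntegrable g volume (-π) 0 := hKI
    have hg1 : IntervalIntegrable g volume 0 π :=
      hmono _ _ ⟨neg_nonpos.mpr hπ.le, hπ.le⟩ ⟨neg_le_self hπ.le, le_refl _⟩
    have hφg0 : IntervalIntegrable (fun x => φ x * g x) volume (-π) 0 :=
      bdd_mul_ii hg0 hφm (fun x hx => hφbdd x (by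
        rw [uIoc_of_le (neg_nonpos.mpr hπ.le)] at hx
        rw [uIoc_of_le (neg_le_self hπ.le)]
        exact ⟨hx.1, le_trans hx.2 hπ.le⟩))
    have hφg1 : IntervalIntegrable (fun x => φ x * g x) volume 0 π :=
      bdd_mul_ii hg1 hφm (fun x hx => hφbdd x (by
        rw [uIoc_of_le hπ.le] at hx
        rw [uIoc_of_le (neg_le_self hπ.le)]
        exact ⟨lt_of_lt_of_le (by linarith : -π < 0) (le_of_lt hx.1), hx.2⟩))
    have hsplit : (∫ x in (-π)..(0:ℝ), φ x * g x) + (∫ x in (0:ℝ)..π, φ x * g x)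
        = ∫ x in (-π)..π, φ x * g x :=
      integral_add_adjacent_intervals hφg0 hφg1
    -- positive half
    have hpos : (∫ x in (0:ℝ)..π, φ x * g x) = ∫ x in (0:ℝ)..π, (-(1/4) * (π - x)) * g x := by
      apply intervalIntegral.integral_congr_ae
      filter_upwards with x hx
      rw [uIoc_of_le hπ.le] at hx
      simp only [hφdef]
      rw [Real.sign_of_pos hx.1, abs_of_pos hx.1]
      ring
    -- negative half
    have hneg : (∫ x in (-π)..(0:ℝ), φ x * g x)
        = ∫ x in (-π)..(0:ℝ), ((1/4) * (π + x)) * g x := by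
      apply intervalIntegral.integral_congr_ae
      have h0 : ∀ᵐ x : ℝ ∂volume, x ≠ 0 := by
        rw [ae_iff]
        simp only [ne_eq, not_not, Set.setOf_eq_eq_singleton]
        exact measure_singleton 0
      filter_upwards [h0] with x hx0 hx
      rw [uIoc_of_le (neg_nonpos.mpr hπ.le)] at hx
      have hxneg : x < 0 := lt_of_le_of_ne hx.2 hx0
      simp only [hφdef]
      rw [Real.sign_of_neg hxneg, abs_of_neg hxneg]
      ring
    -- rewrite (1/4)(π+x) g = -(1/4)(π-x) g + (π/2) g on the negative half
    have hmul0 : IntervalIntegrable (fun x => (-(1/4) * (π - x)) * g x) volume (-π) 0 :=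
      hg0.continuousOn_mul (by fun_prop)
    have hneg2 : (∫ x in (-π)..(0:ℝ), ((1/4) * (π + x)) * g x)
        = (∫ x in (-π)..(0:ℝ), (-(1/4) * (π - x)) * g x) + (π/2) * K := by
      have : (∫ x in (-π)..(0:ℝ), ((1/4) * (π + x)) * g x)
          = ∫ x in (-π)..(0:ℝ), ((-(1/4) * (π - x)) * g x + (π/2) * g x) := by
        apply intervalIntegral.integral_congr
        intro x _; ring
      rw [this, intervalIntegral.integral_add hmul0 (hg0.const_mul _),
        intervalIntegral.integral_const_mul, hKdef]
    -- combine adjacent intervals for (π - x) g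
    have hmul1 : IntervalIntegrable (fun x => (-(1/4) * (π - x)) * g x) volume 0 π :=
      hg1.continuousOn_mul (by fun_prop)
    have hadj : (∫ x in (-π)..(0:ℝ), (-(1/4) * (π - x)) * g x)
        + (∫ x in (0:ℝ)..π, (-(1/4) * (π - x)) * g x)
        = ∫ x in (-π)..π, (-(1/4) * (π - x)) * g x :=
      integral_add_adjacent_intervals hmul0 hmul1
    have hconst : (∫ x in (-π)..π, (-(1/4) * (π - x)) * g x)
        = -(1/4) * ∫ x in (-π)..π, (π - x) * g x := by
      rw [← intervalIntegral.integral_const_mul]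
      apply intervalIntegral.integral_congr
      intro x _; ring
    rw [← hsplit, hpos, hneg, hneg2]
    linarith [hadj, hconst]
  rw [hLHS, hRHS, hcore]
  ring
end

section
/- Let c_* := π/(2√2) and η̃(x) := (π² − 4πx + 2x²)/16. Let ζ : ℝ × ℝ → ℝ be continuously differentiable and 2π-periodic in the second (spatial) variable x, and suppose that for every t ∈ ℝ and every x ∈ (0, 2π): 2c_*·∂t ζ(t,x) = (c_*² − 2η̃(x))·∂x ζ(t,x) − 2·(ζ(t,x) − ζ(t,0))·∂x ζ(t,x) − (1/π)·∫₀^{2π} η̃'(s)·ζ(t,s) ds + (1/2)·[ G(t,x) − (1/2π)·∫₀^{2π} G(t,s) ds ], where G(t,x) := ∫₀^x ( μ(t,y) − μ̄(t) ) dy, μ(t,y) := ζ(t,y) + 2·(∂x ζ(t,y))², and μ̄(t) := (1/2π)·∫₀^{2π} μ(t,y) dy. Then the function t ↦ ∫₀^{2π} ζ(t,x) dx is constant on ℝ. -/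
open Real MeasureTheory

/-- `μ(t,y) = ζ(t,y) + 2(∂ₓζ(t,y))²`. -/
noncomputable def mu (ζ : ℝ × ℝ → ℝ) (t y : ℝ) : ℝ :=
  ζ (t, y) + 2 * (deriv (fun y' => ζ (t, y')) y) ^ 2

/-- `μ̄(t) = (1/2π)∫₀^{2π} μ(t,y) dy`. -/
noncomputable def mubar (ζ : ℝ × ℝ → ℝ) (t : ℝ) : ℝ :=
  (1/(2*π)) * ∫ y in (0:ℝ)..(2*π), mu ζ t y

/-- `G(t,x) = ∫₀ˣ (μ(t,y) − μ̄(t)) dy`. -/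
noncomputable def Gfun (ζ : ℝ × ℝ → ℝ) (t x : ℝ) : ℝ :=
  ∫ y in (0:ℝ)..x, (mu ζ t y - mubar ζ t)

lemma cStar_sq : cStar ^ 2 = π ^ 2 / 8 := by
  unfold cStar
  rw [div_pow, mul_pow, Real.sq_sqrt (by norm_num : (0:ℝ) ≤ 2)]
  ring

lemma cStar_pos : 0 < cStar := by
  unfold cStar
  positivity

lemma etaTilde_hasDerivAt (x : ℝ) : HasDerivAt etaTilde ((x - π)/4) x := by
  have h : HasDerivAt (fun x : ℝ => (π ^ 2 - 4 * π * x + 2 * x ^ 2) / 16)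
      ((0 - 4 * π * 1 + 2 * (↑2 * x ^ 1)) / 16) x := by
    exact (((hasDerivAt_const x (π^2)).sub ((hasDerivAt_id x).const_mul (4*π))).add
      ((hasDerivAt_pow 2 x).const_mul 2)).div_const 16
  have : ((0 - 4 * π * 1 + 2 * (↑2 * x ^ 1)) / 16 : ℝ) = (x - π)/4 := by
    ring
  rw [this] at h
  exact h

/-- For a `C¹`, spatially `2π`-periodic solution `ζ` of the nonlinear evolution
equation for perturbations of the peaked traveling wave, the mean
`∫₀^{2π} ζ(t,x) dx` is conserved in time. -/
theorem mean_conserved (ζ : ℝ × ℝ → ℝ) (hsmooth : ContDiff ℝ 1 ζ)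
    (hper : ∀ t x : ℝ, ζ (t, x + 2*π) = ζ (t, x))
    (hpde : ∀ t : ℝ, ∀ x ∈ Set.Ioo (0:ℝ) (2*π),
      2 * cStar * deriv (fun s => ζ (s, x)) t
        = (cStar ^ 2 - 2 * etaTilde x) * deriv (fun y => ζ (t, y)) x
          - 2 * (ζ (t, x) - ζ (t, 0)) * deriv (fun y => ζ (t, y)) x
          - (1/π) * (∫ s in (0:ℝ)..(2*π), deriv etaTilde s * ζ (t, s))
          + (1/2) * (Gfun ζ t x - (1/(2*π)) * ∫ s in (0:ℝ)..(2*π), Gfun ζ t s)) :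
    ∀ t₁ t₂ : ℝ, (∫ x in (0:ℝ)..(2*π), ζ (t₁, x)) = ∫ x in (0:ℝ)..(2*π), ζ (t₂, x) := by
  have hπ : (0:ℝ) < π := Real.pi_pos
  have hζc : Continuous ζ := hsmooth.continuous
  have hfd : Differentiable ℝ ζ := hsmooth.differentiable one_ne_zero
  have hfdc : Continuous (fun p : ℝ × ℝ => fderiv ℝ ζ p) := hsmooth.continuous_fderiv one_ne_zero
  -- spatial derivative
  have hdx : ∀ t x : ℝ, HasDerivAt (fun y => ζ (t, y)) (fderiv ℝ ζ (t, x) (0, 1)) x := by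
    intro t x
    have h2 : HasDerivAt (fun y : ℝ => ((t, y) : ℝ × ℝ)) ((0 : ℝ), (1 : ℝ)) x :=
      (hasDerivAt_const x t).prodMk (hasDerivAt_id x)
    exact (hfd (t, x)).hasFDerivAt.comp_hasDerivAt x h2
  -- temporal derivative
  have hdt : ∀ t x : ℝ, HasDerivAt (fun s => ζ (s, x)) (fderiv ℝ ζ (t, x) (1, 0)) t := by
    intro t x
    have h2 : HasDerivAt (fun s : ℝ => ((s, x) : ℝ × ℝ)) ((1 : ℝ), (0 : ℝ)) t :=
      (hasDerivAt_id t).prodMk (hasDerivAt_const t x)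
    exact (hfd (t, x)).hasFDerivAt.comp_hasDerivAt t h2
  have hFtc : Continuous (fun p : ℝ × ℝ => fderiv ℝ ζ p (1, 0)) :=
    hfdc.clm_apply continuous_const
  have hFxc : Continuous (fun p : ℝ × ℝ => fderiv ℝ ζ p (0, 1)) :=
    hfdc.clm_apply continuous_const
  -- for each fixed t, everything in the x-variable
  have hzero : ∀ t : ℝ, (∫ x in (0:ℝ)..(2*π), fderiv ℝ ζ (t, x) (1, 0)) = 0 := by
    intro t
    set f : ℝ → ℝ := fun x => ζ (t, x) with hf_def
    set f' : ℝ → ℝ := fun x => fderiv ℝ ζ (t, x) (0, 1) with hf'_def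
    have hfderiv : ∀ x, HasDerivAt f (f' x) x := hdx t
    have hderiv_eq : deriv (fun y => ζ (t, y)) = f' := funext fun x => (hdx t x).deriv
    have hfc : Continuous f := hζc.comp (continuous_const.prodMk continuous_id)
    have hf'c : Continuous f' := hFxc.comp (continuous_const.prodMk continuous_id)
    have hEtac : Continuous etaTilde := by
      unfold etaTilde; fun_prop
    -- continuity of G
    have hmuc : Continuous (mu ζ t) := by
      unfold mu
      rw [hderiv_eq]
      exact hfc.add (continuous_const.mul (hf'c.pow 2))
    have hGc : Continuous (Gfun ζ t) := by
      unfold Gfun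
      exact intervalIntegral.continuous_primitive
        (fun a b => ((hmuc.sub continuous_const).intervalIntegrable a b)) 0
    set K : ℝ := ∫ s in (0:ℝ)..(2*π), deriv etaTilde s * ζ (t, s) with hK_def
    set Gb : ℝ := (1/(2*π)) * ∫ s in (0:ℝ)..(2*π), Gfun ζ t s with hGb_def
    set R : ℝ → ℝ := fun x => (cStar ^ 2 - 2 * etaTilde x) * f' x
      - 2 * (f x - f 0) * f' x - (1/π) * K + (1/2) * (Gfun ζ t x - Gb) with hR_def
    -- integrabilities
    have ha1c : Continuous (fun x => (cStar ^ 2 - 2 * etaTilde x) * f' x) :=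
      (continuous_const.sub (continuous_const.mul hEtac)).mul hf'c
    have ha2c : Continuous (fun x => 2 * (f x - f 0) * f' x) :=
      (continuous_const.mul (hfc.sub continuous_const)).mul hf'c
    have ha4c : Continuous (fun x => (1/2) * (Gfun ζ t x - Gb)) :=
      continuous_const.mul (hGc.sub continuous_const)
    -- the PDE gives the pointwise identity on the open interval
    have hR : ∀ x ∈ Set.Ioo (0:ℝ) (2*π),
        fderiv ℝ ζ (t, x) (1, 0) = (1/(2*cStar)) * R x := by
      intro x hx
      have hp := hpde t x hx
      rw [hderiv_eq, (hdt t x).deriv] at hp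
      have hc : (2 * cStar) ≠ 0 := ne_of_gt (by linarith [cStar_pos])
      have hR' : R x = 2 * cStar * fderiv ℝ ζ (t, x) (1, 0) := by
        simp only [hR_def, hf_def]
        rw [hK_def, hGb_def]
        exact hp.symm
      rw [hR']
      field_simp
      exact (mul_div_cancel_right₀ _ cStar_pos.ne').symm
    -- the integral of R vanishes
    have hU0 : cStar ^ 2 - 2 * etaTilde 0 = 0 := by
      rw [cStar_sq]; unfold etaTilde; ring
    have hU2 : cStar ^ 2 - 2 * etaTilde (2*π) = 0 := by
      rw [cStar_sq]; unfold etaTilde; ring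
    have hA : ∀ x : ℝ, HasDerivAt (fun x => cStar ^ 2 - 2 * etaTilde x)
        (-(2 * ((x - π)/4))) x := fun x =>
      ((etaTilde_hasDerivAt x).const_mul 2).const_sub (cStar ^ 2)
    have I1 : (∫ x in (0:ℝ)..(2*π), (cStar ^ 2 - 2 * etaTilde x) * f' x) = 2 * K := by
      rw [intervalIntegral.integral_mul_deriv_eq_deriv_mul
        (fun x _ => hA x) (fun x _ => hfderiv x)
        (Continuous.intervalIntegrable (by fun_prop) _ _)
        (hf'c.intervalIntegrable _ _)]
      rw [hU0, hU2]
      have h1 : (∫ x in (0:ℝ)..(2*π), (-(2 * ((x - π)/4))) * f x)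
          = (-2) * ∫ x in (0:ℝ)..(2*π), ((x - π)/4) * f x := by
        rw [← intervalIntegral.integral_const_mul]
        congr 1 with x
        ring
      have h2 : K = ∫ x in (0:ℝ)..(2*π), ((x - π)/4) * f x := by
        rw [hK_def]
        congr 1 with s
        rw [(etaTilde_hasDerivAt s).deriv]
      rw [h1, ← h2]
      ring
    have I2 : (∫ x in (0:ℝ)..(2*π), 2 * (f x - f 0) * f' x) = 0 := by
      have hs : ∀ x ∈ Set.uIcc (0:ℝ) (2*π),
          HasDerivAt (fun x => (f x - f 0) ^ 2) (2 * (f x - f 0) * f' x) x := by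
        intro x _
        have := (hasDerivAt_pow 2 (f x - f 0)).comp x ((hfderiv x).sub_const (f 0))
        exact this.congr_deriv (by push_cast; ring)
      rw [intervalIntegral.integral_eq_sub_of_hasDerivAt hs
        (ha2c.intervalIntegrable _ _)]
      have hfp : f (2*π) = f 0 := by
        have := hper t 0
        simpa using this
      rw [hfp]
      ring
    have I4 : (∫ x in (0:ℝ)..(2*π), (1/2) * (Gfun ζ t x - Gb)) = 0 := by
      rw [intervalIntegral.integral_const_mul,
        intervalIntegral.integral_sub (hGc.intervalIntegrable _ _)
          (intervalIntegrable_const)]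
      rw [intervalIntegral.integral_const, hGb_def]
      field_simp
      rw [smul_eq_mul, sub_zero]
      field_simp
      ring
    have hRint : (∫ x in (0:ℝ)..(2*π), R x) = 0 := by
      rw [hR_def]
      rw [show (fun x => (cStar ^ 2 - 2 * etaTilde x) * f' x
          - 2 * (f x - f 0) * f' x - (1/π) * K + (1/2) * (Gfun ζ t x - Gb))
        = fun x => (((cStar ^ 2 - 2 * etaTilde x) * f' x
          - 2 * (f x - f 0) * f' x) - (1/π) * K) + (1/2) * (Gfun ζ t x - Gb) from rfl]
      rw [intervalIntegral.integral_add (f := fun x => (cStar ^ 2 - 2 * etaTilde x) * f' x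
            - 2 * (f x - f 0) * f' x - (1/π) * K) (g := fun x => (1/2) * (Gfun ζ t x - Gb))
        (((ha1c.sub ha2c).sub continuous_const).intervalIntegrable _ _)
        (ha4c.intervalIntegrable _ _),
        intervalIntegral.integral_sub (f := fun x => (cStar ^ 2 - 2 * etaTilde x) * f' x
            - 2 * (f x - f 0) * f' x) (g := fun _ => (1/π) * K)
        ((ha1c.sub ha2c).intervalIntegrable _ _) intervalIntegrable_const,
        intervalIntegral.integral_sub (ha1c.intervalIntegrable _ _)
        (ha2c.intervalIntegrable _ _),
        I1, I2, I4, intervalIntegral.integral_const]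
      have : ((2*π - 0 : ℝ) • ((1/π) * K)) = 2 * K := by
        field_simp
        rw [smul_eq_mul, sub_zero]
        field_simp
      rw [this]
      ring
    -- conclude
    have hcongr : (∫ x in (0:ℝ)..(2*π), fderiv ℝ ζ (t, x) (1, 0))
        = ∫ x in (0:ℝ)..(2*π), (1/(2*cStar)) * R x := by
      apply intervalIntegral.integral_congr_ae
      have hne : ∀ᵐ x : ℝ, x ∉ ({2*π} : Set ℝ) :=
        compl_mem_ae_iff.mpr (measure_singleton _)
      filter_upwards [hne] with x hx hxI
      rw [Set.uIoc_of_le (by positivity : (0:ℝ) ≤ 2*π)] at hxI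
      exact hR x ⟨hxI.1, lt_of_le_of_ne hxI.2 (fun h => hx (by simpa using h))⟩
    rw [hcongr, intervalIntegral.integral_const_mul, hRint, mul_zero]
  -- differentiation under the integral sign
  have hI : ∀ t₀ : ℝ, HasDerivAt (fun t => ∫ x in (0:ℝ)..(2*π), ζ (t, x)) 0 t₀ := by
    intro t₀
    obtain ⟨C, hC⟩ := (IsCompact.prod (isCompact_closedBall t₀ 1)
      (isCompact_uIcc (a := (0:ℝ)) (b := 2*π))).exists_bound_of_continuousOn
      hFtc.continuousOn
    have h := intervalIntegral.hasDerivAt_integral_of_dominated_loc_of_deriv_le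
      (F := fun t x => ζ (t, x)) (F' := fun t x => fderiv ℝ ζ (t, x) (1, 0))
      (x₀ := t₀) (a := 0) (b := 2*π) (bound := fun _ => C) (μ := volume)
      (Metric.ball_mem_nhds t₀ one_pos)
      (Filter.Eventually.of_forall (fun t =>
        ((hζc.comp (continuous_const.prodMk continuous_id)).aestronglyMeasurable)))
      ((hζc.comp (continuous_const.prodMk continuous_id)).intervalIntegrable _ _)
      ((hFtc.comp (continuous_const.prodMk continuous_id)).aestronglyMeasurable)
      ?_ (intervalIntegrable_const) ?_
    · have := h.2
      rw [hzero t₀] at this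
      exact this
    · refine Filter.Eventually.of_forall (fun x hx s hs => ?_)
      rw [Set.uIoc_of_le (by positivity : (0:ℝ) ≤ 2*π)] at hx
      refine hC (s, x) ⟨Metric.ball_subset_closedBall hs, ?_⟩
      rw [Set.uIcc_of_le (by positivity : (0:ℝ) ≤ 2*π)]
      exact ⟨hx.1.le, hx.2⟩
    · exact Filter.Eventually.of_forall (fun x _ s _ => hdt s x)
  intro t₁ t₂
  exact is_const_of_deriv_eq_zero (fun t => (hI t).differentiableAt)
    (fun t => (hI t).deriv) t₁ t₂
end
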